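/- Let φ : X → ℝ be 1-Lipschitz on a metric space (X,d) and Γ := {(x,y) : φ(x) − φ(y) = d(x,y)}. Let Δ ⊆ Γ be any set such that for all (x₀,y₀), (x₁,y₁) ∈ Δ one has (φ(y₁) − φ(y₀))·(φ(x₁) − φ(x₀)) ≥ 0. Then Δ is d²-cyclically monotone: for any finite family (x₁,y₁),…,(x_N,y_N) ∈ Δ, ∑_{i=1}^N d(x_i,y_i)² ≤ ∑_{i=1}^N d(x_i,y_{i+1})², with y_{N+1} := y₁. -/
import Mathlib


/-- If Δ ⊆ Γ = {(x,y) : φ(x) − φ(y) = d(x,y)} (φ 1-Lipschitz) and for all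
(x₀,y₀),(x₁,y₁) ∈ Δ one has (φ(y₁)−φ(y₀))(φ(x₁)−φ(x₀)) ≥ 0, then Δ is d²-cyclically
monotone. -/
theorem stmt_2 {X : Type*} [MetricSpace X] (φ : X → ℝ) (hφ : LipschitzWith 1 φ)
    (Δ : Set (X × X))
    (hΔΓ : ∀ p ∈ Δ, φ p.1 - φ p.2 = dist p.1 p.2)
    (hmono : ∀ p ∈ Δ, ∀ q ∈ Δ, 0 ≤ (φ q.2 - φ p.2) * (φ q.1 - φ p.1))
    (N : ℕ) (x y : Fin (N + 1) → X) (h : ∀ i, (x i, y i) ∈ Δ) :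
    ∑ i, dist (x i) (y i) ^ 2 ≤ ∑ i, dist (x i) (y (i + 1)) ^ 2 := by
  set a : Fin (N + 1) → ℝ := fun i => φ (x i) with ha
  set b : Fin (N + 1) → ℝ := fun i => φ (y i) with hb
  have hab : ∀ i, a i - b i = dist (x i) (y i) := fun i => hΔΓ _ (h i)
  have hmv : Monovary a b := by
    intro i j hlt
    by_contra hc
    push_neg at hc
    have := hmono _ (h i) _ (h j)
    simp only [ha, hb] at *
    nlinarith
  have key : ∑ i, a i * b ((Equiv.addRight (1 : Fin (N + 1))) i) ≤ ∑ i, a i * b i :=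
    hmv.sum_mul_comp_perm_le_sum_mul
  have key' : ∑ i, a i * b (i + 1) ≤ ∑ i, a i * b i := key
  have hsq : ∑ i, (b (i + 1)) ^ 2 = ∑ i, (b i) ^ 2 :=
    Fintype.sum_equiv (Equiv.addRight 1) _ _ (fun i => rfl)
  have hub : ∀ i, (a i - b (i + 1)) ^ 2 ≤ dist (x i) (y (i + 1)) ^ 2 := by
    intro i
    have h1 : |a i - b (i + 1)| ≤ dist (x i) (y (i + 1)) := by
      have := hφ.dist_le_mul (x i) (y (i + 1))
      rw [Real.dist_eq] at this
      simpa using this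
    calc (a i - b (i + 1)) ^ 2 = |a i - b (i + 1)| ^ 2 := (sq_abs _).symm
      _ ≤ dist (x i) (y (i + 1)) ^ 2 := by
          apply pow_le_pow_left₀ (abs_nonneg _) h1
  have e1 : ∑ i, (a i - b i) ^ 2
      = ∑ i, (a i) ^ 2 - 2 * ∑ i, a i * b i + ∑ i, (b i) ^ 2 := by
    rw [Finset.mul_sum, ← Finset.sum_sub_distrib, ← Finset.sum_add_distrib]
    exact Finset.sum_congr rfl fun i _ => by ring
  have e2 : ∑ i, (a i - b (i + 1)) ^ 2
      = ∑ i, (a i) ^ 2 - 2 * ∑ i, a i * b (i + 1) + ∑ i, (b (i + 1)) ^ 2 := by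
    rw [Finset.mul_sum, ← Finset.sum_sub_distrib, ← Finset.sum_add_distrib]
    exact Finset.sum_congr rfl fun i _ => by ring
  calc ∑ i, dist (x i) (y i) ^ 2 = ∑ i, (a i - b i) ^ 2 := by
        exact Finset.sum_congr rfl fun i _ => by rw [hab i]
    _ ≤ ∑ i, (a i - b (i + 1)) ^ 2 := by rw [e1, e2, hsq]; linarith
    _ ≤ ∑ i, dist (x i) (y (i + 1)) ^ 2 := Finset.sum_le_sum fun i _ => hub i
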